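/- Let L ≥ 2 and let W_1,…,W_L be critical for the single-measurement trace-of-Hessian objective with measurement A, i.e. for each 1 ≤ i ≤ L−1, defining W̃_j = W_{j−1}⋯W_1 Aᵀ W_L⋯W_{j+1}, one has W̃_iᵀW̃_i = W̃_{i+1}W̃_{i+1}ᵀ. Then all W̃_1,…,W̃_L have the same multiset of singular values, and (Aᵀ W_L⋯W_1)^{L−1} Aᵀ = U_0 Λ^L U_Lᵀ for some matrices U_0, U_L with orthonormal columns and diagonal nonnegative Λ. -/

import Mathlib

open Matrix Finset

noncomputable def frobNorm {m n : Type*} [Fintype m] [Fintype n] (M : Matrix m n ℝ) : ℝ :=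
  Real.sqrt (∑ i, ∑ j, (M i j) ^ 2)

noncomputable def nuclearNorm {m n : Type*} [Fintype m] [Fintype n] [DecidableEq n]
    (M : Matrix m n ℝ) : ℝ :=
  ∑ i, Real.sqrt ((show (Mᵀ * M).IsHermitian by
    simpa using Matrix.isHermitian_conjTranspose_mul_self M).eigenvalues i)

noncomputable def singularValues {m n : Type*} [Fintype m] [Fintype n] [DecidableEq n]
    (M : Matrix m n ℝ) : n → ℝ :=
  fun i => Real.sqrt ((show (Mᵀ * M).IsHermitian by
    simpa using Matrix.isHermitian_conjTranspose_mul_self M).eigenvalues i)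

noncomputable def spectralNorm' {m n : Type*} [Fintype m] [Fintype n] [DecidableEq n]
    (M : Matrix m n ℝ) : ℝ :=
  ⨆ i, singularValues M i

lemma Matrix.isHermitian_transpose_mul_self {m n : Type*} [Fintype m] [Fintype n]
    (M : Matrix m n ℝ) : (Mᵀ * M).IsHermitian := by
  simpa using Matrix.isHermitian_conjTranspose_mul_self M

set_option linter.unusedSectionVars false


section Aux
variable {m n : Type*} [Fintype m] [Fintype n] [DecidableEq m] [DecidableEq n]

lemma entry_zero_of_diag (N : Matrix m n ℝ) (d : n → ℝ) (e : m → ℝ)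
    (hd : Nᵀ * N = diagonal d) (he : N * Nᵀ = diagonal e)
    {i : m} {j : n} (hij : e i ≠ d j) : N i j = 0 := by
  have h : diagonal e * N = N * diagonal d := by
    rw [← hd, ← he, Matrix.mul_assoc]
  have h2 : (diagonal e * N) i j = (N * diagonal d) i j := by rw [h]
  rw [Matrix.diagonal_mul, Matrix.mul_diagonal] at h2
  have h3 : N i j * (e i - d j) = 0 := by nlinarith [h2]
  rcases mul_eq_zero.1 h3 with h4 | h4
  · exact h4
  · exact absurd (sub_eq_zero.1 h4) hij

lemma card_le_of_diag (N : Matrix m n ℝ) (d : n → ℝ) (e : m → ℝ)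
    (hd : Nᵀ * N = diagonal d) (he : N * Nᵀ = diagonal e)
    {l : ℝ} (hl : l ≠ 0) :
    Fintype.card {j // d j = l} ≤ Fintype.card {i // e i = l} := by
  classical
  set N' : Matrix {i // e i = l} {j // d j = l} ℝ :=
    N.submatrix Subtype.val Subtype.val with hN'
  have key : N'ᵀ * N' = diagonal (fun _ : {j // d j = l} => l) := by
    ext j j'
    have hfull : ∑ i : m, N i j.val * N i j'.val = diagonal d j.val j'.val := by
      rw [← hd]; simp [Matrix.mul_apply]
    have hvanish : ∀ i ∈ (univ : Finset m), i ∉ univ.filter (fun i => e i = l) →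
        N i j.val * N i j'.val = 0 := by
      intro i _ hi
      simp only [mem_filter, mem_univ, true_and] at hi
      have : N i j.val = 0 := entry_zero_of_diag N d e hd he (by rw [j.2]; exact hi)
      rw [this, zero_mul]
    have hsub : ∑ i : {i // e i = l}, N i.val j.val * N i.val j'.val
        = ∑ i : m, N i j.val * N i j'.val := by
      rw [← Finset.sum_subtype (univ.filter (fun i => e i = l))
        (by simp) (fun i => N i j.val * N i j'.val)]
      exact Finset.sum_subset (Finset.filter_subset _ _) hvanish
    have hlhs : (N'ᵀ * N') j j' = ∑ i : {i // e i = l}, N i.val j.val * N i.val j'.val := by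
      simp [Matrix.mul_apply, hN']
    rw [hlhs, hsub, hfull]
    by_cases hjj : j = j'
    · subst hjj
      rw [Matrix.diagonal_apply_eq, Matrix.diagonal_apply_eq, j.2]
    · rw [Matrix.diagonal_apply_ne _ hjj,
        Matrix.diagonal_apply_ne _ (fun h => hjj (Subtype.ext h))]
  have hcard : Fintype.card {j // d j = l} = (N'ᵀ * N').rank := by
    rw [key, Matrix.rank_diagonal]
    exact (Fintype.card_congr (Equiv.subtypeUnivEquiv fun _ => hl)).symm
  calc Fintype.card {j // d j = l} = (N'ᵀ * N').rank := hcard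
    _ ≤ N'.rank := Matrix.rank_mul_le_right _ _
    _ ≤ Fintype.card {i // e i = l} := Matrix.rank_le_card_height _

lemma card_eq_of_diag (N : Matrix m n ℝ) (d : n → ℝ) (e : m → ℝ)
    (hd : Nᵀ * N = diagonal d) (he : N * Nᵀ = diagonal e)
    {l : ℝ} (hl : l ≠ 0) :
    Fintype.card {j // d j = l} = Fintype.card {i // e i = l} := by
  refine le_antisymm (card_le_of_diag N d e hd he hl) ?_
  exact card_le_of_diag Nᵀ e d (by rw [Matrix.transpose_transpose]; exact he) (by rw [Matrix.transpose_transpose]; exact hd) hl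

lemma count_aux_card {α : Type*} [Fintype α] [DecidableEq α] (f : α → ℝ) (a : ℝ) :
    Multiset.card (Multiset.filter (fun x => a = f x) (univ : Finset α).val)
      = Fintype.card {x // f x = a} := by
  classical
  rw [← Finset.filter_val, ← Finset.card_def, Fintype.card_subtype]
  congr 1
  exact Finset.filter_congr (fun x _ => by constructor <;> (intro h; exact h.symm))

lemma multiset_eq_of_diag (N : Matrix m n ℝ) (d : n → ℝ) (e : m → ℝ)
    (hd : Nᵀ * N = diagonal d) (he : N * Nᵀ = diagonal e) :
    Multiset.filter (· ≠ 0) ((univ : Finset n).val.map d)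
      = Multiset.filter (· ≠ 0) ((univ : Finset m).val.map e) := by
  classical
  rw [Multiset.ext]
  intro a
  rw [Multiset.count_filter, Multiset.count_filter]
  by_cases ha : a ≠ 0
  · rw [if_pos ha, if_pos ha, Multiset.count_map, Multiset.count_map,
      count_aux_card d a, count_aux_card e a, card_eq_of_diag N d e hd he ha]
  · rw [if_neg ha, if_neg ha]
end Aux


section Herm
variable {m n : Type*} [Fintype m] [Fintype n] [DecidableEq m] [DecidableEq n]

lemma eig_congr {A B : Matrix n n ℝ} (h : A = B) (hA : A.IsHermitian) (hB : B.IsHermitian) :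
    hA.eigenvalues = hB.eigenvalues := by subst h; rfl

lemma real_spectral (H : Matrix n n ℝ) (hH : H.IsHermitian) :
    (hH.eigenvectorUnitary : Matrix n n ℝ)ᵀ * H * (hH.eigenvectorUnitary : Matrix n n ℝ)
      = diagonal hH.eigenvalues := by
  have := hH.conjStarAlgAut_star_eigenvectorUnitary
  simp only [Unitary.conjStarAlgAut_star_apply, Unitary.conjStarAlgAut_apply, Unitary.coe_star,
    star_star] at this
  rw [Matrix.star_eq_conjTranspose, Matrix.conjTranspose_eq_transpose_of_trivial] at this
  rw [this]
  congr 1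

lemma unitary_tmul (H : Matrix n n ℝ) (hH : H.IsHermitian) :
    (hH.eigenvectorUnitary : Matrix n n ℝ)ᵀ * (hH.eigenvectorUnitary : Matrix n n ℝ) = 1 ∧
    (hH.eigenvectorUnitary : Matrix n n ℝ) * (hH.eigenvectorUnitary : Matrix n n ℝ)ᵀ = 1 := by
  have h1 := (Matrix.mem_unitaryGroup_iff').mp (hH.eigenvectorUnitary).2
  have h2 := (Matrix.mem_unitaryGroup_iff).mp (hH.eigenvectorUnitary).2
  rw [Matrix.star_eq_conjTranspose, Matrix.conjTranspose_eq_transpose_of_trivial] at h1 h2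
  exact ⟨h1, h2⟩

/-- nonzero eigenvalues of `MᴴM` and `MMᴴ` agree as multisets -/
lemma eig_filter_comm (M : Matrix m n ℝ) :
    Multiset.filter (· ≠ 0)
        ((univ : Finset n).val.map (Matrix.isHermitian_transpose_mul_self M).eigenvalues)
      = Multiset.filter (· ≠ 0)
        ((univ : Finset m).val.map (Matrix.isHermitian_mul_conjTranspose_self M).eigenvalues) := by
  classical
  set h1 := Matrix.isHermitian_transpose_mul_self M
  set h2 := Matrix.isHermitian_mul_conjTranspose_self M
  set V : Matrix n n ℝ := (h1.eigenvectorUnitary : Matrix n n ℝ) with hV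
  set Wu : Matrix m m ℝ := (h2.eigenvectorUnitary : Matrix m m ℝ) with hW
  obtain ⟨hV1, hV2⟩ := unitary_tmul _ h1
  obtain ⟨hW1, hW2⟩ := unitary_tmul _ h2
  have hMt : Mᴴ = Mᵀ := Matrix.conjTranspose_eq_transpose_of_trivial M
  set N : Matrix m n ℝ := Wuᵀ * M * V with hN
  have hd : Nᵀ * N = diagonal h1.eigenvalues := by
    calc Nᵀ * N = Vᵀ * (Mᵀ * ((Wu * Wuᵀ) * (M * V))) := by
          rw [hN]; simp only [Matrix.transpose_mul, Matrix.transpose_transpose, Matrix.mul_assoc]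
      _ = Vᵀ * (Mᴴ * M) * V := by
          rw [hW2, Matrix.one_mul, ← hMt]; simp only [Matrix.mul_assoc]
      _ = diagonal h1.eigenvalues := real_spectral _ h1
  have he : N * Nᵀ = diagonal h2.eigenvalues := by
    calc N * Nᵀ = Wuᵀ * (M * ((V * Vᵀ) * (Mᵀ * Wu))) := by
          rw [hN]; simp only [Matrix.transpose_mul, Matrix.transpose_transpose, Matrix.mul_assoc]
      _ = Wuᵀ * (M * Mᴴ) * Wu := by
          rw [hV2, Matrix.one_mul, ← hMt]; simp only [Matrix.mul_assoc]
      _ = diagonal h2.eigenvalues := real_spectral _ h2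
  exact multiset_eq_of_diag N _ _ hd he
end Herm

section SVD
variable {m n : Type*} [Fintype m] [Fintype n] [DecidableEq m] [DecidableEq n]

lemma svd_exists (M : Matrix m n ℝ) :
    ∃ (k : ℕ) (U0 : Matrix m (Fin k) ℝ) (UL : Matrix n (Fin k) ℝ) (s : Fin k → ℝ),
      U0ᵀ * U0 = 1 ∧ ULᵀ * UL = 1 ∧ (∀ i, 0 < s i) ∧ M = U0 * diagonal s * ULᵀ := by
  classical
  set h1 := Matrix.isHermitian_transpose_mul_self M
  set μ : n → ℝ := h1.eigenvalues with hμ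
  have hμ0 : ∀ i, 0 ≤ μ i := Matrix.eigenvalues_conjTranspose_mul_self_nonneg M
  set V : Matrix n n ℝ := (h1.eigenvectorUnitary : Matrix n n ℝ) with hVdef
  obtain ⟨hV1, hV2⟩ := unitary_tmul _ h1
  have hMt : Mᴴ = Mᵀ := Matrix.conjTranspose_eq_transpose_of_trivial M
  set Z : Matrix m n ℝ := M * V with hZdef
  have hZ : Zᵀ * Z = diagonal μ := by
    calc Zᵀ * Z = Vᵀ * (Mᴴ * M) * V := by
          rw [hZdef]; simp only [Matrix.transpose_mul, Matrix.mul_assoc, ← hMt]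
      _ = diagonal μ := real_spectral _ h1
  have hZcol : ∀ j : n, μ j = 0 → ∀ i : m, Z i j = 0 := by
    intro j hj i
    have hdiag : (Zᵀ * Z) j j = 0 := by rw [hZ, Matrix.diagonal_apply_eq, hj]
    have hsum : ∑ a : m, Z a j * Z a j = 0 := by
      rw [← hdiag]; simp [Matrix.mul_apply]
    have := (Finset.sum_eq_zero_iff_of_nonneg (fun a _ => mul_self_nonneg (Z a j))).1 hsum i
      (Finset.mem_univ i)
    exact mul_self_eq_zero.1 this
  set k := Fintype.card {j : n // μ j ≠ 0} with hk
  set e : Fin k ≃ {j : n // μ j ≠ 0} := (Fintype.equivFin _).symm with he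
  set c : Fin k → n := fun i => (e i).val with hc
  have hcinj : Function.Injective c := Subtype.val_injective.comp e.injective
  set s : Fin k → ℝ := fun i => Real.sqrt (μ (c i)) with hs
  have hspos : ∀ i, 0 < s i := fun i =>
    Real.sqrt_pos.2 (lt_of_le_of_ne (hμ0 _) (Ne.symm (e i).2))
  have hss : ∀ i, s i * s i = μ (c i) := fun i => Real.mul_self_sqrt (hμ0 _)
  set UL : Matrix n (Fin k) ℝ := V.submatrix id c with hUL
  set Y : Matrix m (Fin k) ℝ := Z.submatrix id c with hY
  set U0 : Matrix m (Fin k) ℝ := Y * diagonal (fun i => (s i)⁻¹) with hU0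
  have hULorth : ULᵀ * UL = 1 := by
    ext i i'
    have : (ULᵀ * UL) i i' = (Vᵀ * V) (c i) (c i') := by
      simp [hUL, Matrix.mul_apply]
    rw [this, hV1]
    by_cases h : i = i'
    · subst h; simp
    · rw [Matrix.one_apply_ne (fun hcc => h (hcinj hcc)), Matrix.one_apply_ne h]
  have hYY : Yᵀ * Y = diagonal (fun i => μ (c i)) := by
    ext i i'
    have : (Yᵀ * Y) i i' = (Zᵀ * Z) (c i) (c i') := by
      simp [hY, Matrix.mul_apply]
    rw [this, hZ]
    by_cases h : i = i'
    · subst h; simp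
    · rw [Matrix.diagonal_apply_ne _ (fun hcc => h (hcinj hcc)), Matrix.diagonal_apply_ne _ h]
  have hU0orth : U0ᵀ * U0 = 1 := by
    rw [hU0, Matrix.transpose_mul, Matrix.diagonal_transpose]
    calc diagonal (fun i => (s i)⁻¹) * Yᵀ * (Y * diagonal fun i => (s i)⁻¹)
        = diagonal (fun i => (s i)⁻¹) * (Yᵀ * Y) * diagonal (fun i => (s i)⁻¹) := by
          simp only [Matrix.mul_assoc]
      _ = diagonal (fun i => (s i)⁻¹ * (μ (c i)) * (s i)⁻¹) := by
          rw [hYY, Matrix.diagonal_mul_diagonal, Matrix.diagonal_mul_diagonal]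
      _ = 1 := by
          have hfun : (fun i => (s i)⁻¹ * μ (c i) * (s i)⁻¹) = fun _ => (1 : ℝ) := by
            funext i
            rw [← hss i]
            have hne := (hspos i).ne'
            field_simp
          rw [hfun, Matrix.diagonal_one]
  have hMeq : M = Y * ULᵀ := by
    have hMZ : M = Z * Vᵀ := by
      rw [hZdef, Matrix.mul_assoc, hV2, Matrix.mul_one]
    ext a b
    have hrhs : (Y * ULᵀ) a b = ∑ i : Fin k, Z a (c i) * V b (c i) := by
      simp [hY, hUL, Matrix.mul_apply]
    have hlhs : M a b = ∑ j : n, Z a j * V b j := by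
      rw [hMZ]; simp [Matrix.mul_apply]
    rw [hrhs, hlhs]
    have h1' : ∑ i : Fin k, Z a (c i) * V b (c i)
        = ∑ j : {j : n // μ j ≠ 0}, Z a j.val * V b j.val :=
      Fintype.sum_equiv e _ _ (fun i => rfl)
    have h2' : ∑ j : {j : n // μ j ≠ 0}, Z a j.val * V b j.val
        = ∑ j ∈ univ.filter (fun j => μ j ≠ 0), Z a j * V b j :=
      (Finset.sum_subtype (p := fun j => μ j ≠ 0) (univ.filter (fun j => μ j ≠ 0))
        (fun x => by simp) (fun j => Z a j * V b j)).symm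
    rw [h1', h2']
    refine (Finset.sum_subset (Finset.filter_subset _ _) (fun j _ hj => ?_)).symm
    have hj0 : μ j = 0 := by simpa using hj
    rw [hZcol j hj0 a, zero_mul]
  refine ⟨k, U0, UL, s, hU0orth, hULorth, hspos, ?_⟩
  have hUD : U0 * diagonal s = Y := by
    rw [hU0, Matrix.mul_assoc, Matrix.diagonal_mul_diagonal]
    have h11 : (fun i => (s i)⁻¹ * s i) = fun _ => (1 : ℝ) :=
      funext fun i => inv_mul_cancel₀ (hspos i).ne'
    rw [h11, Matrix.diagonal_one, Matrix.mul_one]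
  rw [hUD]; exact hMeq
end SVD

/-- Balancedness of the W̃ⱼ = Q_{j} Aᵀ P_{j+1} implies equal singular values and
    aligned SVDs: (Aᵀ E(W))^{L-1} Aᵀ = U₀ Λ^L U_Lᵀ. -/
theorem balanced_tilde_svd {L : ℕ} (hL : 2 ≤ L) (d : ℕ → ℕ)
    (A : Matrix (Fin (d L)) (Fin (d 0)) ℝ)
    (W : ∀ i : ℕ, Matrix (Fin (d (i + 1))) (Fin (d i)) ℝ)
    (P : ∀ j : ℕ, Matrix (Fin (d L)) (Fin (d j)) ℝ)
    (Q : ∀ j : ℕ, Matrix (Fin (d j)) (Fin (d 0)) ℝ)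
    (hPL : P L = 1) (hP : ∀ j, j < L → P j = P (j + 1) * W j)
    (hQ0 : Q 0 = 1) (hQ : ∀ j, j < L → Q (j + 1) = W j * Q j)
    (hbal : ∀ i, i < L - 1 →
      (Q i * Aᵀ * P (i + 1))ᵀ * (Q i * Aᵀ * P (i + 1))
        = (Q (i + 1) * Aᵀ * P (i + 2)) * (Q (i + 1) * Aᵀ * P (i + 2))ᵀ) :
    (∀ j, j < L →
      Multiset.filter (· ≠ 0)
          (Finset.univ.val.map (singularValues (Q j * Aᵀ * P (j + 1))))
        = Multiset.filter (· ≠ 0)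
          (Finset.univ.val.map (singularValues (Q 0 * Aᵀ * P 1)))) ∧
    ∃ (k : ℕ) (U0 : Matrix (Fin (d 0)) (Fin k) ℝ)
      (UL : Matrix (Fin (d L)) (Fin k) ℝ) (σ : Fin k → ℝ),
      U0ᵀ * U0 = 1 ∧ ULᵀ * UL = 1 ∧ (∀ i, 0 ≤ σ i) ∧
      (Aᵀ * Q L) ^ (L - 1) * Aᵀ
        = U0 * Matrix.diagonal (fun i => σ i ^ L) * ULᵀ := by
  classical
  constructor
  · -- equal nonzero singular values
    set emul : ℕ → Multiset ℝ := fun j =>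
      Multiset.filter (· ≠ 0)
        ((univ : Finset (Fin (d (j + 1)))).val.map
          (Matrix.isHermitian_transpose_mul_self (Q j * Aᵀ * P (j + 1))).eigenvalues) with hemul
    have step : ∀ i, i < L - 1 → emul (i + 1) = emul i := by
      intro i hi
      have hmat : (Q (i + 1) * Aᵀ * P (i + 2)) * (Q (i + 1) * Aᵀ * P (i + 2))ᴴ
          = (Q i * Aᵀ * P (i + 1))ᴴ * (Q i * Aᵀ * P (i + 1)) := by
        rw [Matrix.conjTranspose_eq_transpose_of_trivial,
          Matrix.conjTranspose_eq_transpose_of_trivial]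
        exact (hbal i hi).symm
      calc emul (i + 1)
          = Multiset.filter (· ≠ 0)
              ((univ : Finset (Fin (d (i + 1)))).val.map
                (Matrix.isHermitian_mul_conjTranspose_self
                  (Q (i + 1) * Aᵀ * P (i + 2))).eigenvalues) :=
            eig_filter_comm _
        _ = emul i := by
            rw [hemul]
            rw [eig_congr hmat (Matrix.isHermitian_mul_conjTranspose_self _)
              (Matrix.isHermitian_transpose_mul_self _)]
            rfl
    have hall : ∀ j, j < L → emul j = emul 0 := by
      intro j
      induction j with
      | zero => intro _; rfl
      | succ i ih =>
          intro hj
          rw [step i (by omega)]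
          exact ih (by omega)
    have key : ∀ jj : ℕ,
        Multiset.filter (· ≠ 0)
            ((univ : Finset (Fin (d (jj + 1)))).val.map (singularValues (Q jj * Aᵀ * P (jj + 1))))
          = Multiset.map Real.sqrt (emul jj) := by
      intro jj
      have h0 : (univ : Finset (Fin (d (jj + 1)))).val.map (singularValues (Q jj * Aᵀ * P (jj + 1)))
          = Multiset.map Real.sqrt
              ((univ : Finset (Fin (d (jj + 1)))).val.map
                (Matrix.isHermitian_transpose_mul_self (Q jj * Aᵀ * P (jj + 1))).eigenvalues) := by
        rw [Multiset.map_map]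
        rfl
      rw [h0, Multiset.filter_map, hemul]
      congr 1
      apply Multiset.filter_congr
      intro x hx
      obtain ⟨i, _, rfl⟩ := Multiset.mem_map.1 hx
      have hx0 : 0 ≤ (Matrix.isHermitian_transpose_mul_self (Q jj * Aᵀ * P (jj + 1))).eigenvalues i :=
        Matrix.eigenvalues_conjTranspose_mul_self_nonneg _ i
      simp only [Function.comp_apply, ne_eq]
      constructor
      · intro h h'
        exact h (by rw [h', Real.sqrt_zero])
      · intro h h'
        have := (Real.sqrt_eq_zero hx0).1 h'
        exact h this
    intro j hj
    rw [key j, key 0, hall j hj]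
  · -- SVD part
    obtain ⟨k, U0, UL, s, h0, hLn, hspos, hM⟩ := svd_exists ((Aᵀ * Q L) ^ (L - 1) * Aᵀ)
    have hL0 : (L : ℝ) ≠ 0 := Nat.cast_ne_zero.2 (by omega)
    refine ⟨k, U0, UL, fun i => (s i) ^ ((L : ℝ)⁻¹), h0, hLn,
      fun i => Real.rpow_nonneg (hspos i).le _, ?_⟩
    have hfun : (fun i : Fin k => (fun i : Fin k => s i ^ ((L : ℝ)⁻¹)) i ^ L) = s := by
      funext i
      simp only
      rw [← Real.rpow_natCast ((s i) ^ ((L : ℝ)⁻¹)) L, ← Real.rpow_mul (hspos i).le,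
        inv_mul_cancel₀ hL0, Real.rpow_one]
    rw [hM, hfun]
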